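/- Summed gradient bound for gradient descent: let E be a real inner product space, f : E → ℝ differentiable with K-Lipschitz gradient (K > 0) and bounded below by c ∈ ℝ. Fix a step size η with 0 < η ≤ 1/K and define the iterates x₀ ∈ E, x_{t+1} = x_t − η·∇f(x_t). Then for every T ∈ ℕ, (η/2)·∑_{t=0}^{T−1} ‖∇f(x_t)‖² ≤ f(x₀) − c. -/

import Mathlib

open InnerProductSpace intervalIntegral

lemma grad_continuous {E : Type*} [NormedAddCommGroup E] [InnerProductSpace ℝ E]
    [CompleteSpace E] (f : E → ℝ) (K : ℝ) (hK : 0 ≤ K)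
    (hlip : ∀ x y : E, ‖gradient f x - gradient f y‖ ≤ K * ‖x - y‖) :
    Continuous (gradient f) := by
  have : LipschitzWith K.toNNReal (gradient f) := by
    apply LipschitzWith.of_dist_le_mul
    intro a b
    rw [dist_eq_norm, dist_eq_norm, Real.coe_toNNReal K hK]
    exact hlip a b
  exact this.continuous

lemma descent_lemma {E : Type*} [NormedAddCommGroup E] [InnerProductSpace ℝ E]
    [CompleteSpace E] (f : E → ℝ) (K : ℝ) (hK : 0 ≤ K)
    (hf : Differentiable ℝ f)
    (hlip : ∀ x y : E, ‖gradient f x - gradient f y‖ ≤ K * ‖x - y‖)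
    (x v : E) :
    f (x + v) ≤ f x + inner ℝ (gradient f x) v + K / 2 * ‖v‖ ^ 2 := by
  set G : ℝ → ℝ := fun t => (inner ℝ (gradient f (x + t • v)) v : ℝ) with hG
  have hg : ∀ t : ℝ, HasDerivAt (fun t : ℝ => f (x + t • v)) (G t) t := by
    intro t
    have h1 : HasDerivAt (fun t : ℝ => x + t • v) v t := by
      simpa using ((hasDerivAt_id t).smul_const v).const_add x
    have h2 := (hf (x + t • v)).hasGradientAt.hasFDerivAt
    have h3 := h2.comp_hasDerivAt t h1
    simpa [hG, Function.comp_def] using h3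
  have hcont : Continuous G := by
    have hgc := grad_continuous f K hK hlip
    rw [hG]
    exact (hgc.comp (by fun_prop)).inner continuous_const
  have key : f (x + v) - f x = ∫ t in (0:ℝ)..1, G t := by
    have := intervalIntegral.integral_eq_sub_of_hasDerivAt
      (f := fun t : ℝ => f (x + t • v)) (f' := G)
      (fun t _ => hg t) (hcont.intervalIntegrable 0 1)
    simpa using this.symm
  have hbound : ∀ t ∈ Set.Icc (0:ℝ) 1,
      G t ≤ inner ℝ (gradient f x) v + K * t * ‖v‖ ^ 2 := by
    intro t ht
    have h1 : G t - (inner ℝ (gradient f x) v : ℝ)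
        = inner ℝ (gradient f (x + t • v) - gradient f x) v := by
      rw [inner_sub_left]
    have h2 : (inner ℝ (gradient f (x + t • v) - gradient f x) v : ℝ)
        ≤ ‖gradient f (x + t • v) - gradient f x‖ * ‖v‖ := real_inner_le_norm _ _
    have h3 : ‖gradient f (x + t • v) - gradient f x‖ ≤ K * (t * ‖v‖) := by
      have := hlip (x + t • v) x
      simpa [norm_smul, abs_of_nonneg ht.1] using this
    nlinarith [norm_nonneg v, mul_le_mul_of_nonneg_right h3 (norm_nonneg v)]
  have hint : (∫ t in (0:ℝ)..1, G t)
      ≤ ∫ t in (0:ℝ)..1, (inner ℝ (gradient f x) v + K * t * ‖v‖ ^ 2 : ℝ) := by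
    apply intervalIntegral.integral_mono_on (by norm_num)
      (hcont.intervalIntegrable 0 1)
      (by apply Continuous.intervalIntegrable; fun_prop)
    exact hbound
  have hval : (∫ t in (0:ℝ)..1, (inner ℝ (gradient f x) v + K * t * ‖v‖ ^ 2 : ℝ))
      = inner ℝ (gradient f x) v + K / 2 * ‖v‖ ^ 2 := by
    rw [intervalIntegral.integral_add (intervalIntegrable_const)
      (by apply Continuous.intervalIntegrable; fun_prop)]
    simp only [intervalIntegral.integral_const, smul_eq_mul]
    have : (∫ t in (0:ℝ)..1, K * t * ‖v‖ ^ 2)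
        = K * ‖v‖ ^ 2 * ∫ t in (0:ℝ)..1, t := by
      rw [← intervalIntegral.integral_const_mul]
      congr 1; ext t; ring
    rw [this, integral_id]
    ring
  linarith [key, hint, hval]

/-- Summed gradient bound for gradient descent: with step size `0 < η ≤ 1/K`
and iterates `x_{t+1} = x_t − η·∇f(x_t)`, for every `T`,
`(η/2)·∑_{t<T} ‖∇f(x_t)‖² ≤ f(x₀) − c`, where `c` bounds `f` from below. -/
theorem stmt_9 {E : Type*} [NormedAddCommGroup E] [InnerProductSpace ℝ E]
    [CompleteSpace E]
    (f : E → ℝ) (K : ℝ) (hK : 0 < K)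
    (hf : Differentiable ℝ f)
    (hlip : ∀ x y : E, ‖gradient f x - gradient f y‖ ≤ K * ‖x - y‖)
    (c : ℝ) (hc : ∀ y : E, c ≤ f y)
    (η : ℝ) (hη : 0 < η) (hηK : η ≤ 1 / K)
    (x : ℕ → E) (hx : ∀ t, x (t + 1) = x t - η • gradient f (x t)) :
    ∀ T : ℕ, η / 2 * ∑ t ∈ Finset.range T, ‖gradient f (x t)‖ ^ 2 ≤ f (x 0) - c := by
  have hKη : K * η ≤ 1 := by
    have := mul_le_mul_of_nonneg_left hηK hK.le
    rwa [mul_one_div, div_self hK.ne'] at this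
  have step : ∀ t : ℕ, f (x (t + 1)) ≤ f (x t) - η / 2 * ‖gradient f (x t)‖ ^ 2 := by
    intro t
    have hd := descent_lemma f K hK.le hf hlip (x t) (-(η • gradient f (x t)))
    have hxe : x (t + 1) = x t + -(η • gradient f (x t)) := by
      rw [hx t]; abel
    rw [← hxe] at hd
    have hin : (inner ℝ (gradient f (x t)) (-(η • gradient f (x t))) : ℝ)
        = -(η * ‖gradient f (x t)‖ ^ 2) := by
      rw [inner_neg_right, real_inner_smul_right, real_inner_self_eq_norm_sq]
    have hnv : ‖-(η • gradient f (x t))‖ ^ 2 = η ^ 2 * ‖gradient f (x t)‖ ^ 2 := by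
      rw [norm_neg, norm_smul, Real.norm_eq_abs, abs_of_nonneg hη.le, mul_pow]
    rw [hin, hnv] at hd
    nlinarith [hd, mul_le_mul_of_nonneg_right hKη (sq_nonneg ‖gradient f (x t)‖)]
  intro T
  have main : ∀ T : ℕ,
      η / 2 * ∑ t ∈ Finset.range T, ‖gradient f (x t)‖ ^ 2 ≤ f (x 0) - f (x T) := by
    intro T
    induction T with
    | zero => simp
    | succ n ih =>
      rw [Finset.sum_range_succ, mul_add]
      have := step n
      linarith
  linarith [main T, hc (x T)]
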